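/- arXiv:2003.04337 — 3 statements merged into one kernel-verified Lean document; each statement's English description precedes it below -/
import Mathlib

section
/- Let ε_a be a real random variable with strictly increasing CDF and suppose v_a - v_b = ṽ_a - ṽ_b =: δ. If P(ε_a - ε_b > -δ, v_a + ε_a ≤ y) = P(ε_a - ε_b > -δ, ṽ_a + ε_a ≤ y) for all y ∈ ℝ, and the conditional probability y ↦ P(ε_a - ε_b > -δ, ε_a ≤ y) is strictly increasing on ℝ with P(ε_a - ε_b > -δ) > 0, then v_a = ṽ_a (and hence v_b = ṽ_b). -/
open MeasureTheory

/-- second step of the Roy-model identification. Given matched index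
difference `δ = v_a - v_b = ṽ_a - ṽ_b`, if the joint probabilities
`P(ε_a - ε_b > -δ, v_a + ε_a ≤ y)` coincide for all `y`, and
`y ↦ P(ε_a - ε_b > -δ, ε_a ≤ y)` is strictly increasing with
`P(ε_a - ε_b > -δ) > 0`, then `v_a = ṽ_a` and `v_b = ṽ_b`. -/
theorem stmt_7 {Ω : Type*} [MeasurableSpace Ω] (μ : Measure Ω) [IsProbabilityMeasure μ]
    (εa εb : Ω → ℝ) (hεa : Measurable εa) (hεb : Measurable εb)
    (va vb wa wb δ : ℝ) (hδ : va - vb = δ) (hδ' : wa - wb = δ)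
    (heq : ∀ y : ℝ, μ {ω | -δ < εa ω - εb ω ∧ va + εa ω ≤ y}
        = μ {ω | -δ < εa ω - εb ω ∧ wa + εa ω ≤ y})
    (hmono : StrictMono (fun y : ℝ => (μ {ω | -δ < εa ω - εb ω ∧ εa ω ≤ y}).toReal))
    (hpos : 0 < μ {ω | -δ < εa ω - εb ω}) :
    va = wa ∧ vb = wb := by
  have key := heq (va + wa)
  have h1 : {ω | -δ < εa ω - εb ω ∧ va + εa ω ≤ va + wa}
      = {ω | -δ < εa ω - εb ω ∧ εa ω ≤ wa} := by
    ext ω; constructor <;> rintro ⟨h, h'⟩ <;> exact ⟨h, by linarith⟩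
  have h2 : {ω | -δ < εa ω - εb ω ∧ wa + εa ω ≤ va + wa}
      = {ω | -δ < εa ω - εb ω ∧ εa ω ≤ va} := by
    ext ω; constructor <;> rintro ⟨h, h'⟩ <;> exact ⟨h, by linarith⟩
  rw [h1, h2] at key
  have hva : wa = va := hmono.injective (congrArg ENNReal.toReal key)
  exact ⟨hva.symm, by linarith⟩
end

section
/- Let ε be a real random variable and x ∈ ℝ. Suppose for two location-scale pairs the random variables v₁(x,1) + v₂(x,1)·ε and v₁(x̃,0) + v₂(x̃,0)·ε with positive scales have the same distribution, and ε is not almost surely constant. Then v₂(x,1) = v₂(x̃,0) and v₁(x,1) = v₁(x̃,0). -/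
open MeasureTheory Set Filter Topology

/-- If a sequence tends to `-∞`, the measures of `Iic (t n)` tend to `0`. -/
lemma aux_tendsto_Iic_zero (ν : Measure ℝ) [IsFiniteMeasure ν] (t : ℕ → ℝ)
    (ht : Antitone t) (htop : Tendsto t atTop atBot) :
    Tendsto (fun n => ν (Set.Iic (t n))) atTop (𝓝 0) := by
  have hempty : (⋂ n, Set.Iic (t n)) = (∅ : Set ℝ) := by
    ext x
    simp only [Set.mem_iInter, Set.mem_Iic, Set.mem_empty_iff_false, iff_false, not_forall,
      not_le]
    obtain ⟨n, hn⟩ := (tendsto_atBot.mp htop (x - 1)).exists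
    exact ⟨n, by linarith⟩
  have := tendsto_measure_iInter_atTop (μ := ν)
    (fun n => measurableSet_Iic.nullMeasurableSet)
    (fun i j hij => Set.Iic_subset_Iic.2 (ht hij)) ⟨0, measure_ne_top ν _⟩
  rw [hempty, measure_empty] at this
  exact this

/-- A probability measure whose CDF is `0` below `p` and `1` above `p` is concentrated at `p`. -/
lemma aux_deg (ν : Measure ℝ) [IsProbabilityMeasure ν] (p : ℝ)
    (h0 : ∀ s < p, ν (Set.Iic s) = 0) (h1 : ∀ s, p < s → ν (Set.Iic s) = 1) :
    ν ({p}ᶜ) = 0 := by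
  have hIio : ν (Set.Iio p) = 0 := by
    have hsub : Set.Iio p ⊆ ⋃ n : ℕ, Set.Iic (p - (n + 1 : ℝ)⁻¹) := by
      intro x hx
      simp only [Set.mem_Iio] at hx
      obtain ⟨n, hn⟩ := exists_nat_gt (p - x)⁻¹
      refine Set.mem_iUnion.2 ⟨n, ?_⟩
      simp only [Set.mem_Iic]
      have hpx : 0 < p - x := by linarith
      have h1n : (0:ℝ) < (n:ℝ) + 1 := by positivity
      have : ((n:ℝ) + 1)⁻¹ ≤ p - x := by
        rw [inv_le_comm₀ h1n hpx]
        calc (p - x)⁻¹ ≤ (n:ℝ) := le_of_lt hn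
          _ ≤ (n:ℝ) + 1 := by linarith
      linarith
    refine measure_mono_null hsub (measure_iUnion_null fun n => h0 _ ?_)
    have : (0:ℝ) < ((n:ℝ) + 1)⁻¹ := by positivity
    linarith
  have hIoi : ν (Set.Ioi p) = 0 := by
    have hsub : Set.Ioi p ⊆ ⋃ n : ℕ, (Set.Iic (p + (n + 1 : ℝ)⁻¹))ᶜ := by
      intro x hx
      simp only [Set.mem_Ioi] at hx
      obtain ⟨n, hn⟩ := exists_nat_gt (x - p)⁻¹
      refine Set.mem_iUnion.2 ⟨n, ?_⟩
      simp only [Set.mem_compl_iff, Set.mem_Iic, not_le]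
      have hxp : 0 < x - p := by linarith
      have h1n : (0:ℝ) < (n:ℝ) + 1 := by positivity
      have : ((n:ℝ) + 1)⁻¹ < x - p := by
        rw [inv_lt_comm₀ h1n hxp]
        calc (x - p)⁻¹ < (n:ℝ) := hn
          _ ≤ (n:ℝ) + 1 := by linarith
      linarith
    refine measure_mono_null hsub (measure_iUnion_null fun n => ?_)
    have hs : p < p + ((n:ℝ) + 1)⁻¹ := by
      have : (0:ℝ) < ((n:ℝ) + 1)⁻¹ := by positivity
      linarith
    rw [measure_compl measurableSet_Iic (measure_ne_top ν _), h1 _ hs, measure_univ]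
    simp
  rw [← Set.Iio_union_Ioi]
  exact measure_union_null hIio hIoi

/-- If the CDF is invariant under `s ↦ α s + β` with `α > 1`, the measure is concentrated
at the fixed point `β / (1 - α)`. -/
lemma aux_affine (ν : Measure ℝ) [IsProbabilityMeasure ν] (α β : ℝ) (hα : 1 < α)
    (h : ∀ s, ν (Set.Iic s) = ν (Set.Iic (α * s + β))) :
    ν ({β / (1 - α)}ᶜ) = 0 := by
  set p : ℝ := β / (1 - α) with hp
  have hα1 : (1:ℝ) - α ≠ 0 := by intro hc; linarith
  have hfix : α * p + β = p := by
    have h2 : p * (1 - α) = β := by rw [hp]; exact div_mul_cancel₀ β hα1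
    linear_combination -h2
  -- iterates
  have hiter : ∀ s : ℝ, ∀ n : ℕ, ν (Set.Iic s) = ν (Set.Iic (p + α ^ n * (s - p))) := by
    intro s n
    induction n with
    | zero => simp
    | succ n ih =>
      have harg : α * (p + α ^ n * (s - p)) + β = p + α ^ (n + 1) * (s - p) := by
        rw [pow_succ]
        linear_combination hfix
      rw [ih, h (p + α ^ n * (s - p)), harg]
  have hαpos : (0:ℝ) < α := by linarith
  have hpow : Tendsto (fun n : ℕ => α ^ n) atTop atTop :=
    tendsto_pow_atTop_atTop_of_one_lt hα
  refine aux_deg ν p ?_ ?_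
  · -- s < p : CDF is 0
    intro s hs
    have hneg : s - p < 0 := by linarith
    have htop : Tendsto (fun n : ℕ => p + α ^ n * (s - p)) atTop atBot := by
      refine tendsto_atBot_add_const_left _ p ?_
      exact (hpow.atTop_mul_const_of_neg hneg)
    have hanti : Antitone (fun n : ℕ => p + α ^ n * (s - p)) := by
      intro i j hij
      have h1 : α ^ i ≤ α ^ j := pow_le_pow_right₀ (le_of_lt hα) hij
      have h2 := mul_le_mul_of_nonpos_right h1 (le_of_lt hneg)
      simpa using h2
    have hlim := aux_tendsto_Iic_zero ν _ hanti htop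
    have hconst : ∀ n : ℕ, ν (Set.Iic (p + α ^ n * (s - p))) = ν (Set.Iic s) :=
      fun n => (hiter s n).symm
    have : Tendsto (fun _ : ℕ => ν (Set.Iic s)) atTop (𝓝 0) := by
      refine hlim.congr fun n => hconst n
    exact tendsto_nhds_unique tendsto_const_nhds this
  · -- s > p : CDF is 1
    intro s hs
    have hposd : 0 < s - p := by linarith
    have htop : Tendsto (fun n : ℕ => p + α ^ n * (s - p)) atTop atTop := by
      refine tendsto_atTop_add_const_left _ p ?_
      exact hpow.atTop_mul_const hposd
    have hlim : Tendsto (fun n : ℕ => ν (Set.Iic (p + α ^ n * (s - p)))) atTop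
        (𝓝 (ν Set.univ)) := (tendsto_measure_Iic_atTop ν).comp htop
    have : Tendsto (fun _ : ℕ => ν (Set.Iic s)) atTop (𝓝 (ν Set.univ)) := by
      refine hlim.congr fun n => (hiter s n).symm
    have := tendsto_nhds_unique tendsto_const_nhds this
    rw [this, measure_univ]

/-- A probability CDF cannot be invariant under a nontrivial translation. -/
lemma aux_trans (ν : Measure ℝ) [IsProbabilityMeasure ν] (β : ℝ) (hβ : β ≠ 0)
    (h : ∀ s, ν (Set.Iic s) = ν (Set.Iic (s + β))) : False := by
  -- reduce to positive step c
  obtain ⟨c, hc, hstep⟩ : ∃ c : ℝ, 0 < c ∧ ∀ s, ν (Set.Iic s) = ν (Set.Iic (s + c)) := by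
    rcases lt_or_gt_of_ne hβ with hβneg | hβpos
    · refine ⟨-β, by linarith, fun s => ?_⟩
      have := h (s + -β)
      rw [show s + -β + β = s by ring] at this
      exact this.symm
    · exact ⟨β, hβpos, h⟩
  have hiter : ∀ s : ℝ, ∀ n : ℕ, ν (Set.Iic s) = ν (Set.Iic (s + n * c)) := by
    intro s n
    induction n with
    | zero => simp
    | succ n ih =>
      rw [ih, hstep (s + n * c)]
      congr 2
      push_cast
      ring
  have hiter' : ∀ s : ℝ, ∀ n : ℕ, ν (Set.Iic s) = ν (Set.Iic (s - n * c)) := by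
    intro s n
    have := hiter (s - n * c) n
    rw [show s - ↑n * c + ↑n * c = s by ring] at this
    exact this.symm
  -- upper limit : ν (Iic 0) = 1
  have hup : ν (Set.Iic (0:ℝ)) = 1 := by
    have htop : Tendsto (fun n : ℕ => (0:ℝ) + n * c) atTop atTop := by
      refine tendsto_atTop_add_const_left _ 0 ?_
      exact Tendsto.atTop_mul_const hc tendsto_natCast_atTop_atTop
    have hlim : Tendsto (fun n : ℕ => ν (Set.Iic ((0:ℝ) + n * c))) atTop
        (𝓝 (ν Set.univ)) := (tendsto_measure_Iic_atTop ν).comp htop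
    have : Tendsto (fun _ : ℕ => ν (Set.Iic (0:ℝ))) atTop (𝓝 (ν Set.univ)) :=
      hlim.congr fun n => (hiter 0 n).symm
    have := tendsto_nhds_unique tendsto_const_nhds this
    rw [this, measure_univ]
  -- lower limit : ν (Iic 0) = 0
  have hdown : ν (Set.Iic (0:ℝ)) = 0 := by
    have hanti : Antitone (fun n : ℕ => (0:ℝ) - n * c) := by
      intro i j hij
      have h1 : (i:ℝ) ≤ (j:ℝ) := Nat.cast_le.2 hij
      have h2 := mul_le_mul_of_nonneg_right h1 (le_of_lt hc)
      simp only [zero_sub]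
      linarith
    have htop : Tendsto (fun n : ℕ => (0:ℝ) - n * c) atTop atBot := by
      have : Tendsto (fun n : ℕ => (n:ℝ) * c) atTop atTop :=
        Tendsto.atTop_mul_const hc tendsto_natCast_atTop_atTop
      have hneg : Tendsto (fun n : ℕ => -((n:ℝ) * c)) atTop atBot :=
        tendsto_neg_atBot_iff.mpr this
      simpa [sub_eq_add_neg] using tendsto_atBot_add_const_left atTop (0:ℝ) hneg
    have hlim := aux_tendsto_Iic_zero ν _ hanti htop
    have : Tendsto (fun _ : ℕ => ν (Set.Iic (0:ℝ))) atTop (𝓝 0) :=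
      hlim.congr fun n => (hiter' 0 n).symm
    exact tendsto_nhds_unique tendsto_const_nhds this
  rw [hup] at hdown
  exact one_ne_zero hdown

/-- Example 1 variant: if `v₁(x,1) + v₂(x,1)·ε` and
`v₁(x̃,0) + v₂(x̃,0)·ε` with positive scales have the same distribution and `ε` is not
almost surely constant, then the scales and locations coincide. -/
theorem stmt_14 {Ω : Type*} [MeasurableSpace Ω] (μ : Measure Ω) [IsProbabilityMeasure μ]
    (ε : Ω → ℝ) (hε : Measurable ε)
    (v₁x1 v₂x1 v₁x0 v₂x0 : ℝ) (hb : 0 < v₂x1) (hd : 0 < v₂x0)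
    (hdist : μ.map (fun ω => v₁x1 + v₂x1 * ε ω) = μ.map (fun ω => v₁x0 + v₂x0 * ε ω))
    (hnondeg : ¬ ∃ r : ℝ, ∀ᵐ ω ∂μ, ε ω = r) :
    v₂x1 = v₂x0 ∧ v₁x1 = v₁x0 := by
  set a := v₁x1; set b := v₂x1; set c := v₁x0; set d := v₂x0
  set ν : Measure ℝ := μ.map ε with hν
  have : IsProbabilityMeasure ν := Measure.isProbabilityMeasure_map hε.aemeasurable
  -- CDF relation
  have hCDF : ∀ t : ℝ, ν (Set.Iic ((t - a) / b)) = ν (Set.Iic ((t - c) / d)) := by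
    intro t
    have h1 : μ.map (fun ω => a + b * ε ω) (Set.Iic t) =
        ν (Set.Iic ((t - a) / b)) := by
      rw [Measure.map_apply (by fun_prop) measurableSet_Iic,
        Measure.map_apply hε measurableSet_Iic]
      congr 1
      ext ω
      simp only [Set.mem_preimage, Set.mem_Iic]
      rw [le_div_iff₀ hb]
      constructor <;> intro h <;> nlinarith
    have h2 : μ.map (fun ω => c + d * ε ω) (Set.Iic t) =
        ν (Set.Iic ((t - c) / d)) := by
      rw [Measure.map_apply (by fun_prop) measurableSet_Iic,
        Measure.map_apply hε measurableSet_Iic]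
      congr 1
      ext ω
      simp only [Set.mem_preimage, Set.mem_Iic]
      rw [le_div_iff₀ hd]
      constructor <;> intro h <;> nlinarith
    rw [← h1, ← h2, hdist]
  -- rewrite as F(s) = F(α s + β)
  set α : ℝ := b / d with hαdef
  set β : ℝ := (a - c) / d with hβdef
  have hαpos : 0 < α := div_pos hb hd
  have hrel : ∀ s : ℝ, ν (Set.Iic s) = ν (Set.Iic (α * s + β)) := by
    intro s
    have := hCDF (a + b * s)
    rw [show (a + b * s - a) / b = s by field_simp; ring] at this
    rw [show (a + b * s - c) / d = α * s + β by rw [hαdef, hβdef]; field_simp; ring] at this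
    exact this
  -- nondegeneracy in terms of ν
  have hdeg : ∀ p : ℝ, ν ({p}ᶜ) ≠ 0 := by
    intro p hcp
    refine hnondeg ⟨p, ?_⟩
    have : μ (ε ⁻¹' {p}ᶜ) = 0 := by
      rw [← Measure.map_apply hε (measurableSet_singleton p).compl]
      exact hcp
    filter_upwards [measure_eq_zero_iff_ae_notMem.mp this] with ω hω
    simpa using hω
  -- case analysis on α
  rcases lt_trichotomy α 1 with hα | hα | hα
  · -- α < 1 : invert the relation to get slope 1/α > 1
    exfalso
    have hα' : 1 < α⁻¹ := (one_lt_inv₀ hαpos).2 hα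
    have hrel' : ∀ s : ℝ, ν (Set.Iic s) = ν (Set.Iic (α⁻¹ * s + (-β / α))) := by
      intro s
      have := hrel ((s - β) / α)
      rw [show α * ((s - β) / α) + β = s by field_simp; ring] at this
      rw [show (s - β) / α = α⁻¹ * s + (-β / α) by field_simp; ring] at this
      exact this.symm
    exact hdeg _ (aux_affine ν α⁻¹ (-β / α) hα' hrel')
  · -- α = 1 : translation, so β = 0
    have hβ0 : β = 0 := by
      by_contra hβ
      refine aux_trans ν β hβ ?_
      intro s
      have := hrel s
      rwa [hα, one_mul] at this
    have hbd : b = d := by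
      have : b / d = 1 := hα
      field_simp at this
      exact this
    have hac : a = c := by
      have : (a - c) / d = 0 := hβ0
      have := (div_eq_zero_iff.mp this).resolve_right (ne_of_gt hd)
      linarith
    exact ⟨hbd, hac⟩
  · -- α > 1
    exact absurd (aux_affine ν α β hα hrel) (hdeg _)
end

section
/- In the multinomial choice model Y = argmax_{j=0,...,J} (v_j + ε_j) with v₀ = 0, ε₀ = 0, if ε = (ε₁,...,ε_J) has a density positive everywhere on ℝᴶ conditional on U = u, then the map v ∈ ℝᴶ ↦ (P(v_j + ε_j ≥ v_{j'} + ε_{j'} ∀ j' | U=u))_{j=1,...,J} ∈ ℝᴶ is injective. -/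
open MeasureTheory
open scoped ENNReal

/-- A hyperplane `{e | e j - e j' = c}` in `ℝᴶ` is Lebesgue-null (for `j ≠ j'`). -/
private lemma hyperplane_null {J : ℕ} (j j' : Fin J) (hjj : j ≠ j') (c : ℝ) :
    (volume : Measure (Fin J → ℝ)) {e | e j - e j' = c} = 0 := by
  classical
  set L : (Fin J → ℝ) →ₗ[ℝ] ℝ := (LinearMap.proj j : (Fin J → ℝ) →ₗ[ℝ] ℝ) - (LinearMap.proj j' : (Fin J → ℝ) →ₗ[ℝ] ℝ) with hLdef
  have hLapply : ∀ e : Fin J → ℝ, L e = e j - e j' := fun e => rfl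
  have hker : LinearMap.ker L ≠ ⊤ := by
    intro h
    have h1 : L (Pi.single j 1) = 0 := by
      rw [LinearMap.ker_eq_top] at h
      simp [h]
    rw [hLapply, Pi.single_eq_same, Pi.single_eq_of_ne (Ne.symm hjj)] at h1
    norm_num at h1
  set e₀ : Fin J → ℝ := Pi.single j c with he₀
  have hLe₀ : L e₀ = c := by
    rw [hLapply, he₀, Pi.single_eq_same, Pi.single_eq_of_ne (Ne.symm hjj)]
    ring
  have hLshift : ∀ e : Fin J → ℝ, L (-e₀ + e) = -c + (e j - e j') := by
    intro e
    rw [map_add, map_neg, hLe₀, hLapply]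
  have hset : {e : Fin J → ℝ | e j - e j' = c}
      = (fun x => (-e₀) + x) ⁻¹' (LinearMap.ker L : Set (Fin J → ℝ)) := by
    ext e
    simp only [Set.mem_preimage, SetLike.mem_coe, LinearMap.mem_ker, hLshift,
      Set.mem_setOf_eq]
    constructor <;> intro h <;> linarith
  rw [hset, measure_preimage_add]
  exact Measure.addHaar_submodule _ _ hker

private lemma aux_contra {J : ℕ} {Ω : Type*} [MeasurableSpace Ω] (μ : Measure Ω)
    [IsProbabilityMeasure μ]
    (ε : Ω → (Fin J → ℝ)) (hε : Measurable ε)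
    (f : (Fin J → ℝ) → ℝ≥0∞) (hfmeas : Measurable f) (hfpos : ∀ e, 0 < f e)
    (hdens : μ.map ε = (volume : Measure (Fin J → ℝ)).withDensity f)
    (v w : Fin J → ℝ)
    (heq : ∀ j, μ {ω | (∀ j' : Fin J, v j' + ε ω j' ≤ v j + ε ω j) ∧ 0 ≤ v j + ε ω j}
              = μ {ω | (∀ j' : Fin J, w j' + ε ω j' ≤ w j + ε ω j) ∧ 0 ≤ w j + ε ω j})
    (j₀ : Fin J) (hlt : w j₀ < v j₀) : False := by
  classical
  set E : (Fin J → ℝ) → Fin J → Set Ω := fun u j =>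
    {ω | (∀ j' : Fin J, u j' + ε ω j' ≤ u j + ε ω j) ∧ 0 ≤ u j + ε ω j} with hE
  have hmeasE : ∀ u j, MeasurableSet (E u j) := by
    intro u j
    have hej : ∀ k : Fin J, Measurable (fun ω => u k + ε ω k) := fun k =>
      measurable_const.add ((measurable_pi_apply k).comp hε)
    have : E u j = (⋂ j' : Fin J, {ω | u j' + ε ω j' ≤ u j + ε ω j})
        ∩ {ω | 0 ≤ u j + ε ω j} := by
      ext ω; simp [hE]
    rw [this]
    exact (MeasurableSet.iInter fun j' => measurableSet_le (hej j') (hej j)).inter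
      (measurableSet_le measurable_const (hej j))
  -- max of v - w and its argmax
  have hne : (Finset.univ : Finset (Fin J)).Nonempty := ⟨j₀, Finset.mem_univ _⟩
  set M : ℝ := Finset.univ.sup' hne (fun j => v j - w j) with hM
  obtain ⟨js, -, hjs⟩ := Finset.exists_mem_eq_sup' (H := hne) (fun j => v j - w j)
  have hMle : ∀ j, v j - w j ≤ M := by
    intro j
    rw [hM]
    exact Finset.le_sup' (fun j => v j - w j) (Finset.mem_univ j)
  have hMpos : 0 < M := lt_of_lt_of_le (by linarith) (hMle j₀)
  set A : Finset (Fin J) := Finset.univ.filter (fun j => v j - w j = M) with hA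
  have hjsA : js ∈ A := by simp [hA, hjs.symm, hM]
  have hAval : ∀ j ∈ A, v j - w j = M := by
    intro j hj; simpa [hA] using hj
  -- for j in A, E w j ⊆ E v j
  have hsub : ∀ j ∈ A, E w j ⊆ E v j := by
    intro j hj ω hω
    obtain ⟨h1, h2⟩ := hω
    have hjM := hAval j hj
    constructor
    · intro j'
      have := h1 j'
      have := hMle j'
      simp only [hE, Set.mem_setOf_eq] at *
      linarith
    · simp only [hE, Set.mem_setOf_eq] at *
      linarith
  -- a.e. disjointness of the choice events (ties are null)
  have hnull : ∀ (u : Fin J → ℝ) (j j' : Fin J), j ≠ j' → μ (E u j ∩ E u j') = 0 := by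
    intro u j j' hjj
    have hHmeas : MeasurableSet {e : Fin J → ℝ | e j - e j' = u j' - u j} :=
      measurableSet_eq_fun ((measurable_pi_apply j).sub (measurable_pi_apply j'))
        measurable_const
    have hsubH : E u j ∩ E u j' ⊆ ε ⁻¹' {e | e j - e j' = u j' - u j} := by
      rintro ω ⟨⟨h1, -⟩, ⟨h2, -⟩⟩
      have ha := h1 j'
      have hb := h2 j
      simp only [Set.mem_preimage, Set.mem_setOf_eq]
      linarith
    refine measure_mono_null hsubH ?_
    calc μ (ε ⁻¹' {e | e j - e j' = u j' - u j})
        = (μ.map ε) {e | e j - e j' = u j' - u j} := (Measure.map_apply hε hHmeas).symm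
      _ = ∫⁻ e in {e : Fin J → ℝ | e j - e j' = u j' - u j}, f e := by
          rw [hdens, withDensity_apply _ hHmeas]
      _ = 0 := setLIntegral_measure_zero _ _ (hyperplane_null j j' hjj _)
  have hpair : ∀ u : Fin J → ℝ, (↑A : Set (Fin J)).Pairwise (Function.onFun (AEDisjoint μ) (E u)) := by
    intro u j _ j' _ hjj
    exact hnull u j j' hjj
  have hsumv : μ (⋃ j ∈ A, E v j) = ∑ j ∈ A, μ (E v j) :=
    measure_biUnion_finset₀ (hpair v) (fun b _ => (hmeasE v b).nullMeasurableSet)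
  have hsumw : μ (⋃ j ∈ A, E w j) = ∑ j ∈ A, μ (E w j) :=
    measure_biUnion_finset₀ (hpair w) (fun b _ => (hmeasE w b).nullMeasurableSet)
  -- the box of perturbations
  set a : Fin J → ℝ := fun j => if j = js then -v js else min (-v j) (-w j) - 1 with ha
  set b : Fin J → ℝ := fun j => if j = js then -w js else min (-v j) (-w j) with hb
  have hab : ∀ j, a j < b j := by
    intro j
    by_cases h : j = js
    · subst h
      simp only [ha, hb, if_pos rfl]
      have hMeq : v j - w j = M := hjs.symm
      linarith
    · simp only [ha, hb, if_neg h]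
      linarith
  set O : Set (Fin J → ℝ) := Set.univ.pi (fun j => Set.Ioo (a j) (b j)) with hO
  have hOmeas : MeasurableSet O := MeasurableSet.univ_pi (fun j => measurableSet_Ioo)
  have hOvol : volume O ≠ 0 := by
    rw [hO, volume_pi_pi]
    rw [Finset.prod_ne_zero_iff]
    intro j _
    rw [Real.volume_Ioo]
    exact (ENNReal.ofReal_pos.mpr (by linarith [hab j])).ne'
  set S : Set Ω := ε ⁻¹' O with hS
  have hSmeas : MeasurableSet S := hε hOmeas
  have hSpos : 0 < μ S := by
    have hmap : μ S = (μ.map ε) O := (Measure.map_apply hε hOmeas).symm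
    rw [pos_iff_ne_zero, hmap, hdens]
    intro h0
    rw [withDensity_apply_eq_zero hfmeas] at h0
    have hO' : {x | f x ≠ 0} ∩ O = O := by
      ext x; simp [(hfpos x).ne']
    rw [hO'] at h0
    exact hOvol h0
  have hSsub : S ⊆ E v js := by
    intro ω hω
    rw [hS, Set.mem_preimage, hO, Set.mem_univ_pi] at hω
    have hstar := hω js
    simp only [ha, hb, if_pos rfl] at hstar
    have hstar1 : -v js < ε ω js := hstar.1
    constructor
    · intro j'
      by_cases h : j' = js
      · subst h; exact le_refl _
      · have hj' := hω j'
        simp only [ha, hb, if_neg h] at hj'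
        have : ε ω j' < min (-v j') (-w j') := hj'.2
        have := min_le_left (-v j') (-w j')
        linarith
    · linarith
  have hSdisj : ∀ j, ∀ ω ∈ S, ω ∉ E w j := by
    intro j ω hωS hωE
    have h2 : 0 ≤ w j + ε ω j := hωE.2
    rw [hS, Set.mem_preimage, hO, Set.mem_univ_pi] at hωS
    have hj := hωS j
    by_cases h : j = js
    · subst h
      simp only [ha, hb, if_pos rfl] at hj
      linarith [hj.2]
    · simp only [ha, hb, if_neg h] at hj
      have := min_le_right (-v j) (-w j)
      linarith [hj.2]
  -- the strict inequality
  have hdisj : Disjoint (⋃ j ∈ A, E w j) S := by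
    rw [Set.disjoint_right]
    intro ω hωS hωU
    simp only [Set.mem_iUnion] at hωU
    obtain ⟨j, -, hj⟩ := hωU
    exact hSdisj j ω hωS hj
  have hunion_sub : (⋃ j ∈ A, E w j) ∪ S ⊆ ⋃ j ∈ A, E v j := by
    apply Set.union_subset
    · exact Set.iUnion₂_mono (fun j hj => hsub j hj)
    · exact hSsub.trans (Set.subset_biUnion_of_mem hjsA)
  have hkey : μ (⋃ j ∈ A, E w j) + μ S ≤ μ (⋃ j ∈ A, E v j) := by
    rw [← measure_union hdisj hSmeas]
    exact measure_mono hunion_sub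
  have hlt' : μ (⋃ j ∈ A, E w j) < μ (⋃ j ∈ A, E v j) :=
    lt_of_lt_of_le (ENNReal.lt_add_right (measure_ne_top μ _) hSpos.ne') hkey
  have hsums : ∑ j ∈ A, μ (E v j) = ∑ j ∈ A, μ (E w j) :=
    Finset.sum_congr rfl (fun j _ => heq j)
  rw [hsumw, hsumv, hsums] at hlt'
  exact lt_irrefl _ hlt'

/-- Example 2: in the multinomial choice model with `v₀ = 0`, `ε₀ = 0`,
if `ε = (ε₁,...,ε_J)` has an everywhere-positive density on `ℝᴶ` (conditional on
`U = u`, here represented by the probability measure `μ`), the map from the index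
vector `v` to the vector of choice probabilities is injective. -/
theorem stmt_17 {J : ℕ} {Ω : Type*} [MeasurableSpace Ω] (μ : Measure Ω)
    [IsProbabilityMeasure μ]
    (ε : Ω → (Fin J → ℝ)) (hε : Measurable ε)
    (f : (Fin J → ℝ) → ℝ≥0∞) (hfmeas : Measurable f) (hfpos : ∀ e, 0 < f e)
    (hdens : μ.map ε = (volume : Measure (Fin J → ℝ)).withDensity f) :
    Function.Injective (fun v : Fin J → ℝ => fun j : Fin J =>
      (μ {ω | (∀ j' : Fin J, v j' + ε ω j' ≤ v j + ε ω j) ∧ 0 ≤ v j + ε ω j}).toReal) := by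
  intro v w h
  by_contra hne
  have heq : ∀ j, μ {ω | (∀ j' : Fin J, v j' + ε ω j' ≤ v j + ε ω j) ∧ 0 ≤ v j + ε ω j}
      = μ {ω | (∀ j' : Fin J, w j' + ε ω j' ≤ w j + ε ω j) ∧ 0 ≤ w j + ε ω j} := by
    intro j
    have := congrFun h j
    exact (ENNReal.toReal_eq_toReal_iff' (measure_ne_top _ _) (measure_ne_top _ _)).mp this
  obtain ⟨j₀, hj₀⟩ := Function.ne_iff.mp hne
  rcases lt_or_gt_of_ne hj₀ with hc | hc
  · exact aux_contra μ ε hε f hfmeas hfpos hdens w v (fun j => (heq j).symm) j₀ hc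
  · exact aux_contra μ ε hε f hfmeas hfpos hdens v w heq j₀ hc
end
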